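/- Let G = ℝⁿ with Lebesgue measure, and let E ⊂ ℝⁿ be measurable. Fix x ∈ ℝⁿ. Suppose E has a blowup F at x along a sequence r_j ↓ 0, i.e., the indicators of x + (E−x)/r_j converge in L¹_loc to the indicator of F. If x belongs to the strong measure-theoretic boundary of E (meaning 0 < liminf_{r→0} |B_r(x) ∩ E|/|B_r(x)| and limsup_{r→0} |B_r(x) ∩ E|/|B_r(x)| < 1), then x belongs to the strong measure-theoretic boundary of F. -/

import Mathlib

open Filter MeasureTheory

/-- The density ratio of a set `E` in the ball `B_ρ(x)`. -/
noncomputable def densityRatio {n : ℕ} (E : Set (EuclideanSpace ℝ (Fin n)))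
    (x : EuclideanSpace ℝ (Fin n)) (ρ : ℝ) : ℝ :=
  (volume (Metric.ball x ρ ∩ E)).toReal / (volume (Metric.ball x ρ)).toReal

/-- `x` belongs to the strong measure-theoretic boundary of `E`. -/
def StrongMTBoundary {n : ℕ} (E : Set (EuclideanSpace ℝ (Fin n)))
    (x : EuclideanSpace ℝ (Fin n)) : Prop :=
  0 < liminf (fun ρ => densityRatio E x ρ) (nhdsWithin 0 (Set.Ioi 0)) ∧
    limsup (fun ρ => densityRatio E x ρ) (nhdsWithin 0 (Set.Ioi 0)) < 1

lemma densityRatio_nonneg {n : ℕ} (E : Set (EuclideanSpace ℝ (Fin n)))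
    (x : EuclideanSpace ℝ (Fin n)) (ρ : ℝ) : 0 ≤ densityRatio E x ρ :=
  div_nonneg ENNReal.toReal_nonneg ENNReal.toReal_nonneg

lemma densityRatio_le_one {n : ℕ} (E : Set (EuclideanSpace ℝ (Fin n)))
    (x : EuclideanSpace ℝ (Fin n)) (ρ : ℝ) : densityRatio E x ρ ≤ 1 :=
  div_le_one_of_le₀ (ENNReal.toReal_mono measure_ball_lt_top.ne
    (measure_mono Set.inter_subset_left)) ENNReal.toReal_nonneg

lemma ballPre {n : ℕ} (x : EuclideanSpace ℝ (Fin n)) {r : ℝ} (hr : 0 < r) (ρ : ℝ) :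
    {y : EuclideanSpace ℝ (Fin n) | x + r • (y - x) ∈ Metric.ball x (r * ρ)} = Metric.ball x ρ := by
  ext y
  simp only [Set.mem_setOf_eq, Metric.mem_ball, dist_eq_norm, add_sub_cancel_left, norm_smul,
    Real.norm_eq_abs, abs_of_pos hr]
  exact mul_lt_mul_iff_right₀ hr

lemma exists_scale {n : ℕ} (x : EuclideanSpace ℝ (Fin n)) {r : ℝ} (hr : r ≠ 0) :
    ∃ c : ENNReal, c ≠ 0 ∧ c ≠ ⊤ ∧ ∀ s : Set (EuclideanSpace ℝ (Fin n)),
      volume {y | x + r • (y - x) ∈ s} = c * volume s := by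
  refine ⟨ENNReal.ofReal |(r ^ Module.finrank ℝ (EuclideanSpace ℝ (Fin n)))⁻¹|, ?_,
    ENNReal.ofReal_ne_top, ?_⟩
  · simp only [ne_eq, ENNReal.ofReal_eq_zero, not_le]
    exact abs_pos.2 (inv_ne_zero (pow_ne_zero _ hr))
  · intro s
    have h1 : {y : EuclideanSpace ℝ (Fin n) | x + r • (y - x) ∈ s}
        = (fun y => y + (-x)) ⁻¹' ((fun z => r • z) ⁻¹' ((fun w => x + w) ⁻¹' s)) := by
      ext y; simp [sub_eq_add_neg]
    rw [h1, measure_preimage_add_right, Measure.addHaar_preimage_smul _ hr, measure_preimage_add]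

lemma densityRatio_scale {n : ℕ} (E : Set (EuclideanSpace ℝ (Fin n)))
    (x : EuclideanSpace ℝ (Fin n)) {r ρ : ℝ} (hr : 0 < r) :
    densityRatio E x (r * ρ)
      = (volume (Metric.ball x ρ ∩ {y | x + r • (y - x) ∈ E})).toReal
        / (volume (Metric.ball x ρ)).toReal := by
  obtain ⟨c, hc0, hcT, hc⟩ := exists_scale x hr.ne'
  have h1 : Metric.ball x ρ ∩ {y : EuclideanSpace ℝ (Fin n) | x + r • (y - x) ∈ E}
      = {y | x + r • (y - x) ∈ Metric.ball x (r * ρ) ∩ E} := by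
    rw [← ballPre x hr ρ]
    ext y
    simp [Set.mem_setOf_eq, Set.mem_inter_iff]
  have hnum : volume (Metric.ball x ρ ∩ {y : EuclideanSpace ℝ (Fin n) | x + r • (y - x) ∈ E})
      = c * volume (Metric.ball x (r * ρ) ∩ E) := by rw [h1]; exact hc _
  have hden : volume (Metric.ball x ρ) = c * volume (Metric.ball x (r * ρ)) := by
    rw [← ballPre x hr ρ]; exact hc _
  rw [hnum, hden, ENNReal.toReal_mul, ENNReal.toReal_mul,
    mul_div_mul_left _ _ (ENNReal.toReal_ne_zero.mpr ⟨hc0, hcT⟩)]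
  rfl

lemma toReal_inter_eq_integral {n : ℕ} {A : Set (EuclideanSpace ℝ (Fin n))} (hA : MeasurableSet A)
    (x : EuclideanSpace ℝ (Fin n)) (ρ : ℝ) :
    (volume (Metric.ball x ρ ∩ A)).toReal
      = ∫ y in Metric.ball x ρ, A.indicator (fun _ => (1 : ℝ)) y := by
  have h := MeasureTheory.integral_indicator_one (μ := volume.restrict (Metric.ball x ρ)) hA
  rw [measureReal_restrict_apply hA, Set.inter_comm] at h
  exact h.symm

lemma intOnBall {n : ℕ} {A : Set (EuclideanSpace ℝ (Fin n))} (hA : MeasurableSet A)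
    (z : EuclideanSpace ℝ (Fin n)) (ρ : ℝ) :
    IntegrableOn (A.indicator fun _ => (1 : ℝ)) (Metric.ball z ρ) volume :=
  ((MeasureTheory.integrableOn_const_iff (C := (1 : ℝ))).mpr (Or.inr measure_ball_lt_top)).indicator hA

lemma tendsto_numerator {n : ℕ} (E F : Set (EuclideanSpace ℝ (Fin n)))
    (hE : MeasurableSet E) (hF : MeasurableSet F)
    (x : EuclideanSpace ℝ (Fin n)) (r : ℕ → ℝ)
    (hconv : ∀ R > (0 : ℝ),
      Tendsto (fun j => ∫ y in Metric.ball (0 : EuclideanSpace ℝ (Fin n)) R,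
          |Set.indicator {y | x + r j • (y - x) ∈ E} (fun _ => (1 : ℝ)) y -
            Set.indicator F (fun _ => (1 : ℝ)) y| ∂volume)
        atTop (nhds 0))
    (ρ : ℝ) (hρ : 0 < ρ) :
    Tendsto (fun j => (volume (Metric.ball x ρ ∩ {y | x + r j • (y - x) ∈ E})).toReal)
      atTop (nhds ((volume (Metric.ball x ρ ∩ F)).toReal)) := by
  set R : ℝ := ‖x‖ + ρ with hRdef
  have hR : 0 < R := add_pos_of_nonneg_of_pos (norm_nonneg x) hρ
  have hsub : Metric.ball x ρ ⊆ Metric.ball (0 : EuclideanSpace ℝ (Fin n)) R :=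
    Metric.ball_subset_ball' (by rw [dist_zero_right]; linarith)
  have hEj : ∀ j, MeasurableSet {y : EuclideanSpace ℝ (Fin n) | x + r j • (y - x) ∈ E} := by
    intro j
    have hmap : Measurable fun y : EuclideanSpace ℝ (Fin n) => x + r j • (y - x) :=
      measurable_const.add ((measurable_id.sub measurable_const).const_smul (r j))
    exact hmap hE
  have hkey : ∀ j,
      |(volume (Metric.ball x ρ ∩ {y | x + r j • (y - x) ∈ E})).toReal
        - (volume (Metric.ball x ρ ∩ F)).toReal|
      ≤ ∫ y in Metric.ball (0 : EuclideanSpace ℝ (Fin n)) R,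
          |Set.indicator {y | x + r j • (y - x) ∈ E} (fun _ => (1 : ℝ)) y -
            Set.indicator F (fun _ => (1 : ℝ)) y| ∂volume := by
    intro j
    rw [toReal_inter_eq_integral (hEj j), toReal_inter_eq_integral hF,
      ← integral_sub (intOnBall (hEj j) x ρ) (intOnBall hF x ρ)]
    have habs : |∫ y in Metric.ball x ρ,
        (Set.indicator {y | x + r j • (y - x) ∈ E} (fun _ => (1 : ℝ)) y -
          Set.indicator F (fun _ => (1 : ℝ)) y) ∂volume|
        ≤ ∫ y in Metric.ball x ρ,
          |Set.indicator {y | x + r j • (y - x) ∈ E} (fun _ => (1 : ℝ)) y -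
            Set.indicator F (fun _ => (1 : ℝ)) y| ∂volume := by
      simpa [Real.norm_eq_abs] using
        norm_integral_le_integral_norm (μ := volume.restrict (Metric.ball x ρ))
          fun y => Set.indicator {y | x + r j • (y - x) ∈ E} (fun _ => (1 : ℝ)) y -
            Set.indicator F (fun _ => (1 : ℝ)) y
    refine habs.trans ?_
    refine setIntegral_mono_set (((intOnBall (hEj j) 0 R).sub (intOnBall hF 0 R)).abs) ?_
      (HasSubset.Subset.eventuallyLE hsub)
    exact Eventually.of_forall fun y => abs_nonneg _
  have h0 : Tendsto (fun j =>
      |(volume (Metric.ball x ρ ∩ {y | x + r j • (y - x) ∈ E})).toReal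
        - (volume (Metric.ball x ρ ∩ F)).toReal|) atTop (nhds 0) :=
    squeeze_zero (fun j => abs_nonneg _) hkey (hconv R hR)
  rw [tendsto_iff_dist_tendsto_zero]
  simpa [Real.dist_eq] using h0

/-- If `F` is a blowup of `E ⊆ ℝⁿ` at `x` along scales `r_j ↓ 0` (indicators of
the rescaled sets converge in `L¹_loc` to the indicator of `F`) and `x` lies in
the strong measure-theoretic boundary of `E`, then `x` lies in the strong
measure-theoretic boundary of `F`. -/
theorem stmt_6 {n : ℕ} (E F : Set (EuclideanSpace ℝ (Fin n)))
    (hE : MeasurableSet E) (hF : MeasurableSet F)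
    (x : EuclideanSpace ℝ (Fin n))
    (r : ℕ → ℝ) (hrpos : ∀ j, 0 < r j) (hranti : StrictAnti r)
    (hr0 : Tendsto r atTop (nhds 0))
    (hconv : ∀ R > (0 : ℝ),
      Tendsto (fun j => ∫ y in Metric.ball (0 : EuclideanSpace ℝ (Fin n)) R,
          |Set.indicator {y | x + r j • (y - x) ∈ E} (fun _ => (1 : ℝ)) y -
            Set.indicator F (fun _ => (1 : ℝ)) y| ∂volume)
        atTop (nhds 0))
    (hx : StrongMTBoundary E x) :
    StrongMTBoundary F x := by
  set l : Filter ℝ := nhdsWithin 0 (Set.Ioi 0) with hl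
  set L : ℝ := liminf (fun ρ => densityRatio E x ρ) l with hL
  set U : ℝ := limsup (fun ρ => densityRatio E x ρ) l with hU
  -- main limit: densityRatio E x (r j * ρ) → densityRatio F x ρ
  have hlim : ∀ ρ : ℝ, 0 < ρ →
      Tendsto (fun j => densityRatio E x (r j * ρ)) atTop (nhds (densityRatio F x ρ)) := by
    intro ρ hρ
    have h := (tendsto_numerator E F hE hF x r hconv ρ hρ).div_const
      ((volume (Metric.ball x ρ)).toReal)
    have heq : (fun j => densityRatio E x (r j * ρ))
        = fun j => (volume (Metric.ball x ρ ∩ {y | x + r j • (y - x) ∈ E})).toReal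
          / (volume (Metric.ball x ρ)).toReal :=
      funext fun j => densityRatio_scale E x (hrpos j)
    rw [heq]
    exact h
  have hφ : ∀ ρ : ℝ, 0 < ρ → Tendsto (fun j => r j * ρ) atTop l := by
    intro ρ hρ
    refine tendsto_nhdsWithin_of_tendsto_nhds_of_eventually_within _ ?_
      (Eventually.of_forall fun j => mul_pos (hrpos j) hρ)
    simpa using hr0.mul_const ρ
  have key : ∀ ρ : ℝ, 0 < ρ → L ≤ densityRatio F x ρ ∧ densityRatio F x ρ ≤ U := by
    intro ρ hρ
    constructor
    · by_contra h
      push_neg at h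
      obtain ⟨c, hc1, hc2⟩ := exists_between h
      have hev : ∀ᶠ ρ' in l, c < densityRatio E x ρ' :=
        eventually_lt_of_lt_liminf hc2
          (isBoundedUnder_of ⟨0, fun ρ' => densityRatio_nonneg E x ρ'⟩)
      have : c ≤ densityRatio F x ρ :=
        ge_of_tendsto (hlim ρ hρ) (((hφ ρ hρ).eventually hev).mono fun j hj => hj.le)
      exact absurd this (not_le.2 hc1)
    · by_contra h
      push_neg at h
      obtain ⟨c, hc1, hc2⟩ := exists_between h
      have hev : ∀ᶠ ρ' in l, densityRatio E x ρ' < c :=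
        eventually_lt_of_limsup_lt hc1
          (isBoundedUnder_of ⟨1, fun ρ' => densityRatio_le_one E x ρ'⟩)
      have : densityRatio F x ρ ≤ c :=
        le_of_tendsto (hlim ρ hρ) (((hφ ρ hρ).eventually hev).mono fun j hj => hj.le)
      exact absurd this (not_le.2 hc2)
  have hevF : ∀ᶠ ρ in l, L ≤ densityRatio F x ρ ∧ densityRatio F x ρ ≤ U :=
    eventually_mem_nhdsWithin.mono fun ρ hρ => key ρ hρ
  constructor
  · refine lt_of_lt_of_le hx.1 ?_
    exact le_liminf_of_le (isCoboundedUnder_ge_of_le l fun ρ' => densityRatio_le_one F x ρ')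
      (hevF.mono fun ρ h => h.1)
  · refine lt_of_le_of_lt ?_ hx.2
    exact limsup_le_of_le (isCoboundedUnder_le_of_le l fun ρ' => densityRatio_nonneg F x ρ')
      (hevF.mono fun ρ h => h.2)
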